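/- Rule 76 globally simulates Rule 4: let F, G : {0,1}^ℤ → {0,1}^ℤ be the global rules of the elementary cellular automata Rule 4 and Rule 76, i.e., F(c)(i) = f(c(i−1), c(i), c(i+1)) where f(0,1,0) = 1 and f = 0 on all other triples, and G(c)(i) = g(c(i−1), c(i), c(i+1)) where g(1,1,1) = 0 and g(x,y,z) = y on all other triples. Define E : {0,1}^ℤ → {0,1}^ℤ by E(c)(2i) = E(c)(2i+1) = c(i) for all i ∈ ℤ, and D : {0,1}^ℤ → {0,1}^ℤ by D(c)(i) = 1 if c(2i) = c(2i+1) = 1 and D(c)(i) = 0 otherwise. Then for every c ∈ {0,1}^ℤ and every n ∈ ℕ: D(G^{2n}(E(c))) = F^n(c). -/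
import Mathlib


/-- Local rule of the elementary CA Rule 4: `f(0,1,0) = 1` and `f = 0` otherwise. -/
def rule4 (x y z : Bool) : Bool := !x && y && !z

/-- Local rule of the elementary CA Rule 76: `g(1,1,1) = 0` and `g(x,y,z) = y`
otherwise. -/
def rule76 (x y z : Bool) : Bool := if x && y && z then false else y

/-- Global rule of Rule 4. -/
def F4 (c : ℤ → Bool) : ℤ → Bool := fun i => rule4 (c (i - 1)) (c i) (c (i + 1))

/-- Global rule of Rule 76. -/
def F76 (c : ℤ → Bool) : ℤ → Bool := fun i => rule76 (c (i - 1)) (c i) (c (i + 1))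

/-- The decoder `D`: `D(c)(i) = 1` iff `c(2i) = c(2i+1) = 1`. -/
def Dec (c : ℤ → Bool) : ℤ → Bool := fun i => c (2 * i) && c (2 * i + 1)

lemma aux_step (E : (ℤ → Bool) → ℤ → Bool)
    (hE : ∀ (c : ℤ → Bool) (i : ℤ),
      E c (2 * i) = c i ∧ E c (2 * i + 1) = c i)
    (c : ℤ → Bool) (i : ℤ) :
    F76 (E c) (2 * i) = (c i && !c (i - 1)) ∧
      F76 (E c) (2 * i + 1) = (c i && !c (i + 1)) := by
  have h1 : (2 * i - 1 : ℤ) = 2 * (i - 1) + 1 := by ring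
  have h2 : (2 * i + 1 + 1 : ℤ) = 2 * (i + 1) := by ring
  constructor
  · show rule76 (E c (2 * i - 1)) (E c (2 * i)) (E c (2 * i + 1)) = _
    rw [h1, (hE c (i - 1)).2, (hE c i).1, (hE c i).2]
    cases c (i - 1) <;> cases c i <;> rfl
  · show rule76 (E c (2 * i + 1 - 1)) (E c (2 * i + 1)) (E c (2 * i + 1 + 1)) = _
    have h3 : (2 * i + 1 - 1 : ℤ) = 2 * i := by ring
    rw [h3, h2, (hE c i).1, (hE c i).2, (hE c (i + 1)).1]
    cases c (i + 1) <;> cases c i <;> rfl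

lemma aux_fix (E : (ℤ → Bool) → ℤ → Bool)
    (hE : ∀ (c : ℤ → Bool) (i : ℤ),
      E c (2 * i) = c i ∧ E c (2 * i + 1) = c i)
    (c : ℤ → Bool) :
    F76 (F76 (E c)) = F76 (E c) := by
  funext j
  obtain ⟨k, hk | hk⟩ := Int.even_or_odd' j
  · subst hk
    show rule76 (F76 (E c) (2 * k - 1)) (F76 (E c) (2 * k)) (F76 (E c) (2 * k + 1)) = _
    have h1 : (2 * k - 1 : ℤ) = 2 * (k - 1) + 1 := by ring
    have h2 : (k - 1 + 1 : ℤ) = k := by ring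
    rw [h1, (aux_step E hE c (k - 1)).2, h2, (aux_step E hE c k).1,
      (aux_step E hE c k).2]
    cases c (k - 1) <;> cases c k <;> cases c (k + 1) <;> rfl
  · subst hk
    show rule76 (F76 (E c) (2 * k + 1 - 1)) (F76 (E c) (2 * k + 1))
        (F76 (E c) (2 * k + 1 + 1)) = _
    have h1 : (2 * k + 1 - 1 : ℤ) = 2 * k := by ring
    have h2 : (2 * k + 1 + 1 : ℤ) = 2 * (k + 1) := by ring
    rw [h1, h2, (aux_step E hE c k).1, (aux_step E hE c k).2,
      (aux_step E hE c (k + 1)).1]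
    cases c (k - 1) <;> cases c k <;> cases c (k + 1) <;> rfl

lemma aux_dec (E : (ℤ → Bool) → ℤ → Bool)
    (hE : ∀ (c : ℤ → Bool) (i : ℤ),
      E c (2 * i) = c i ∧ E c (2 * i + 1) = c i)
    (c : ℤ → Bool) :
    Dec (F76 (E c)) = F4 c := by
  funext i
  show (F76 (E c) (2 * i) && F76 (E c) (2 * i + 1)) = rule4 (c (i - 1)) (c i) (c (i + 1))
  rw [(aux_step E hE c i).1, (aux_step E hE c i).2]
  cases c (i - 1) <;> cases c i <;> cases c (i + 1) <;> rfl

lemma rule4_idem (a b c d e : Bool) :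
    rule4 (rule4 a b c) (rule4 b c d) (rule4 c d e) = rule4 b c d := by
  cases a <;> cases b <;> cases c <;> cases d <;> cases e <;> rfl

lemma aux_F4_fix (c : ℤ → Bool) : F4 (F4 c) = F4 c := by
  funext i
  show rule4 (F4 c (i - 1)) (F4 c i) (F4 c (i + 1)) = _
  have h1 : (i - 1 + 1 : ℤ) = i := by ring
  have h2 : (i + 1 - 1 : ℤ) = i := by ring
  show rule4 (rule4 (c (i - 1 - 1)) (c (i - 1)) (c (i - 1 + 1)))
      (rule4 (c (i - 1)) (c i) (c (i + 1)))
      (rule4 (c (i + 1 - 1)) (c (i + 1)) (c (i + 1 + 1))) = _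
  rw [h1, h2, rule4_idem]
  rfl

lemma iter_fix {α : Type*} (f : α → α) (x : α) (h : f (f x) = f x) :
    ∀ k, f^[k + 1] x = f x := by
  intro k
  induction k with
  | zero => simp
  | succ m ih => rw [Function.iterate_succ_apply', ih, h]

/-- Rule 76 globally simulates Rule 4: with the encoder `E` given by
`E(c)(2i) = E(c)(2i+1) = c(i)` and the decoder `D` above, for every configuration `c`
and every `n ∈ ℕ` one has `D(G^{2n}(E(c))) = F^n(c)`. -/
theorem rule76_simulates_rule4
    (E : (ℤ → Bool) → ℤ → Bool)
    (hE : ∀ (c : ℤ → Bool) (i : ℤ),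
      E c (2 * i) = c i ∧ E c (2 * i + 1) = c i) :
    ∀ (c : ℤ → Bool) (n : ℕ), Dec (F76^[2 * n] (E c)) = F4^[n] c := by
  intro c n
  cases n with
  | zero =>
    simp only [Nat.mul_zero, Function.iterate_zero, id]
    funext i
    show (E c (2 * i) && E c (2 * i + 1)) = c i
    rw [(hE c i).1, (hE c i).2, Bool.and_self]
  | succ m =>
    have h76 : F76^[2 * (m + 1)] (E c) = F76 (E c) := by
      have : 2 * (m + 1) = (2 * m + 1) + 1 := by ring
      rw [this, iter_fix F76 (E c) (aux_fix E hE c)]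
    have h4 : F4^[m + 1] c = F4 c := iter_fix F4 c (aux_F4_fix c) m
    rw [h76, h4, aux_dec E hE c]
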